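/- For the Bernoulli-lemniscate system, the zero set of the gradient of the Lyapunov function W(x,y) = V(I(x,y)) is exactly the lemniscate of Bernoulli together with the two foci equilibria: ∇W(x,y) = (0,0) if and only if (x,y) lies on the curve L = {(x,y) ∈ ℝ² : (x²+y²)² = 4(x²−y²)} or (x,y) ∈ {(√2, 0), (−√2, 0)}. -/

import Mathlib

/-- `I(x,y) = (x²+y²)² − 4(x²−y²)`. -/
noncomputable def lemI (x y : ℝ) : ℝ := (x ^ 2 + y ^ 2) ^ 2 - 4 * (x ^ 2 - y ^ 2)

/-- `V(s) = s²/(2(1+s²)^{3/4})`. -/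
noncomputable def lemV (s : ℝ) : ℝ := s ^ 2 / (2 * (1 + s ^ 2) ^ ((3 : ℝ) / 4))

/-- The Lyapunov function `W = V ∘ I` on `ℝ²`. -/
noncomputable def lemW (p : EuclideanSpace ℝ (Fin 2)) : ℝ := lemV (lemI (p 0) (p 1))

noncomputable def lemf (s : ℝ) : ℝ := s * (s ^ 2 + 4) / (4 * (1 + s ^ 2) ^ ((7 : ℝ) / 4))

lemma hasDerivAt_lemV (s : ℝ) : HasDerivAt lemV (lemf s) s := by
  have ht : (0:ℝ) < 1 + s ^ 2 := by positivity
  have h1 : HasDerivAt (fun s : ℝ => 1 + s ^ 2) (2 * s) s := by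
    simpa using ((hasDerivAt_pow 2 s).const_add 1)
  have h2 : HasDerivAt (fun s : ℝ => (1 + s ^ 2) ^ ((3:ℝ)/4))
      (2 * s * ((3:ℝ)/4) * (1 + s ^ 2) ^ ((3:ℝ)/4 - 1)) s :=
    h1.rpow_const (Or.inl ht.ne')
  have h3 : HasDerivAt (fun s : ℝ => 2 * (1 + s ^ 2) ^ ((3:ℝ)/4))
      (2 * (2 * s * ((3:ℝ)/4) * (1 + s ^ 2) ^ ((3:ℝ)/4 - 1))) s := h2.const_mul 2
  have hden : 2 * (1 + s ^ 2) ^ ((3:ℝ)/4) ≠ 0 := by positivity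
  have h4 := (hasDerivAt_pow 2 s).div h3 hden
  refine h4.congr_deriv ?_
  have e1 : (1 + s ^ 2) ^ ((3:ℝ)/4) = (1 + s ^ 2) * (1 + s ^ 2) ^ (-(1:ℝ)/4) := by
    rw [← Real.rpow_one_add' ht.le (by norm_num)]; norm_num
  have e2 : ((3:ℝ)/4 - 1) = (-(1:ℝ)/4) := by norm_num
  have e3 : ((2 * (1 + s ^ 2) ^ ((3:ℝ)/4)) ^ 2) = 4 * ((1 + s ^ 2) ^ ((7:ℝ)/4) * (1 + s ^ 2) ^ (-(1:ℝ)/4)) := by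
    rw [mul_pow, ← Real.rpow_natCast ((1 + s ^ 2) ^ ((3:ℝ)/4)) 2, ← Real.rpow_mul ht.le,
      ← Real.rpow_add ht]
    norm_num
  rw [lemf, e2, e3]
  rw [div_eq_div_iff (by positivity) (by positivity)]
  rw [e1]
  have hne : (1 + s ^ 2) ^ (-(1:ℝ)/4) ≠ 0 := by positivity
  ring

lemma lemf_eq_zero_iff (s : ℝ) : lemf s = 0 ↔ s = 0 := by
  have ht : (0:ℝ) < 1 + s ^ 2 := by positivity
  rw [lemf, div_eq_zero_iff]
  constructor
  · rintro (h | h)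
    · rcases mul_eq_zero.1 h with h | h
      · exact h
      · nlinarith
    · exact absurd h (by positivity)
  · intro h; left; simp [h]

lemma hasGradientAt_lemW (p : EuclideanSpace ℝ (Fin 2)) :
    HasGradientAt lemW
      ((WithLp.equiv 2 (Fin 2 → ℝ)).symm
        ![lemf (lemI (p 0) (p 1)) * (4 * p 0 * (p 0 ^ 2 + p 1 ^ 2) - 8 * p 0),
          lemf (lemI (p 0) (p 1)) * (4 * p 1 * (p 0 ^ 2 + p 1 ^ 2) + 8 * p 1)]) p := by
  set P0 : EuclideanSpace ℝ (Fin 2) →L[ℝ] ℝ := EuclideanSpace.proj 0 with hP0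
  set P1 : EuclideanSpace ℝ (Fin 2) →L[ℝ] ℝ := EuclideanSpace.proj 1 with hP1
  have h0 := P0.hasFDerivAt (x := p)
  have h1 := P1.hasFDerivAt (x := p)
  have hI : HasFDerivAt (fun q : EuclideanSpace ℝ (Fin 2) => lemI (q 0) (q 1))
      (((2 * (p 0 ^ 2 + p 1 ^ 2) : ℝ) •
          (((2 * p 0 : ℝ) • P0) +
           ((2 * p 1 : ℝ) • P1))) -
        (4 : ℝ) • (((2 * p 0 : ℝ) • P0) -
           ((2 * p 1 : ℝ) • P1))) p := by
    have hx2 := h0.mul h0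
    have hy2 := h1.mul h1
    have hsum := hx2.add hy2
    have hsq := hsum.mul hsum
    have hdiff := hx2.sub hy2
    have h := hsq.sub (hdiff.const_mul (4:ℝ))
    have hfun : (fun q : EuclideanSpace ℝ (Fin 2) => lemI (q 0) (q 1)) =
        (fun q : EuclideanSpace ℝ (Fin 2) => (P0 q * P0 q + P1 q * P1 q) * (P0 q * P0 q + P1 q * P1 q) - 4 * (P0 q * P0 q - P1 q * P1 q)) := by
      funext q
      simp [lemI, hP0, hP1, PiLp.proj_apply]
      ring
    rw [hfun]
    refine h.congr_fderiv ?_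
    apply ContinuousLinearMap.ext
    intro w
    simp only [ContinuousLinearMap.smul_apply, ContinuousLinearMap.sub_apply,
      ContinuousLinearMap.add_apply, smul_eq_mul, hP0, hP1, PiLp.proj_apply, Pi.add_apply, Pi.mul_apply, Pi.pow_apply]
    ring
  have hW := (hasDerivAt_lemV (lemI (p 0) (p 1))).comp_hasFDerivAt p hI
  rw [hasGradientAt_iff_hasFDerivAt]
  refine hW.congr_fderiv ?_
  apply ContinuousLinearMap.ext
  intro w
  simp only [InnerProductSpace.toDual_apply_apply, PiLp.inner_apply, RCLike.inner_apply,
    Fin.sum_univ_two, starRingEnd_apply, star_trivial,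
    ContinuousLinearMap.smul_apply, ContinuousLinearMap.sub_apply, ContinuousLinearMap.add_apply,
    PiLp.proj_apply, smul_eq_mul, WithLp.equiv_symm_apply, WithLp.ofLp_toLp,
    Matrix.cons_val_zero, Matrix.cons_val_one, Matrix.head_cons, hP0, hP1, PiLp.proj_apply]
  ring


lemma foci_A (x : ℝ) (hx : x ^ 2 = 2) : 4 * x * (x ^ 2 + (0:ℝ) ^ 2) - 8 * x = 0 := by
  rw [hx]; ring

/-- The zero set of the gradient of `W = V ∘ I` is exactly the lemniscate of Bernoulli
`{(x,y) : (x²+y²)² = 4(x²−y²)}` together with the two foci `(√2, 0)` and `(−√2, 0)`. -/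
theorem lemniscate_gradient_zero_set (p : EuclideanSpace ℝ (Fin 2)) :
    gradient lemW p = 0 ↔
      ((p 0 ^ 2 + p 1 ^ 2) ^ 2 = 4 * (p 0 ^ 2 - p 1 ^ 2) ∨
        p = (WithLp.equiv 2 (Fin 2 → ℝ)).symm ![Real.sqrt 2, 0] ∨
        p = (WithLp.equiv 2 (Fin 2 → ℝ)).symm ![-Real.sqrt 2, 0]) := by
  have hgrad := (hasGradientAt_lemW p).gradient
  rw [hgrad]
  set x := p 0 with hx
  set y := p 1 with hy
  set c := lemf (lemI x y) with hc
  have h2 : Real.sqrt 2 ^ 2 = 2 := Real.sq_sqrt (by norm_num)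
  have hzero : ((WithLp.equiv 2 (Fin 2 → ℝ)).symm
      ![c * (4 * x * (x ^ 2 + y ^ 2) - 8 * x), c * (4 * y * (x ^ 2 + y ^ 2) + 8 * y)] = 0)
      ↔ (c * (4 * x * (x ^ 2 + y ^ 2) - 8 * x) = 0 ∧ c * (4 * y * (x ^ 2 + y ^ 2) + 8 * y) = 0) := by
    rw [Equiv.symm_apply_eq]
    constructor
    · intro h
      constructor
      · have := congrFun h 0; simpa using this
      · have := congrFun h 1; simpa using this
    · intro ⟨ha, hb⟩
      funext i
      fin_cases i <;> simp [ha, hb]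
  rw [hzero]
  have hfoc1 : (p = (WithLp.equiv 2 (Fin 2 → ℝ)).symm ![Real.sqrt 2, 0]) ↔
      (x = Real.sqrt 2 ∧ y = 0) := by
    rw [eq_comm, Equiv.symm_apply_eq]
    constructor
    · intro h
      exact ⟨(congrFun h 0).symm, (congrFun h 1).symm⟩
    · intro ⟨ha, hb⟩
      funext i
      fin_cases i <;> simp [← ha, ← hb, hx, hy]
  have hfoc2 : (p = (WithLp.equiv 2 (Fin 2 → ℝ)).symm ![-Real.sqrt 2, 0]) ↔
      (x = -Real.sqrt 2 ∧ y = 0) := by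
    rw [eq_comm, Equiv.symm_apply_eq]
    constructor
    · intro h
      exact ⟨(congrFun h 0).symm, (congrFun h 1).symm⟩
    · intro ⟨ha, hb⟩
      funext i
      fin_cases i <;> simp [← ha, ← hb, hx, hy]
  rw [hfoc1, hfoc2]
  have hlem : ((x ^ 2 + y ^ 2) ^ 2 = 4 * (x ^ 2 - y ^ 2)) ↔ lemI x y = 0 := by
    rw [lemI, sub_eq_zero]
  rw [hlem]
  constructor
  · rintro ⟨hA, hB⟩
    by_cases hc0 : c = 0
    · left; exact (lemf_eq_zero_iff _).1 (hc ▸ hc0)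
    · have hA' : 4 * x * (x ^ 2 + y ^ 2) - 8 * x = 0 := by
        rcases mul_eq_zero.1 hA with h | h; exact absurd h hc0; exact h
      have hB' : 4 * y * (x ^ 2 + y ^ 2) + 8 * y = 0 := by
        rcases mul_eq_zero.1 hB with h | h; exact absurd h hc0; exact h
      have hy0 : y = 0 := by nlinarith [sq_nonneg x, sq_nonneg y]
      rw [hy0] at hA'
      have : 4 * x * (x * x - 2) = 0 := by nlinarith
      rcases mul_eq_zero.1 this with h | h
      · have hx0 : x = 0 := by linarith
        left
        simp [lemI, hx0, hy0]
      · have hx2 : x ^ 2 = 2 := by nlinarith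
        have : (x - Real.sqrt 2) * (x + Real.sqrt 2) = 0 := by nlinarith
        rcases mul_eq_zero.1 this with h' | h'
        · right; left; exact ⟨by linarith, hy0⟩
        · right; right; exact ⟨by linarith, hy0⟩
  · rintro (h | ⟨hxe, hye⟩ | ⟨hxe, hye⟩)
    · have : c = 0 := (lemf_eq_zero_iff _).2 h
      simp [this]
    · rw [hxe, hye]
      refine ⟨?_, by ring⟩
      rw [foci_A _ h2, mul_zero]
    · rw [hxe, hye]
      refine ⟨?_, by ring⟩
      rw [foci_A _ (by rw [neg_sq]; exact h2), mul_zero]
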